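/- Let D ⊆ {±1}^K be a finite dictionary, Γ ~ N(μ m, σ² I_K) with true message m ∈ D, μ > 0, σ > 0. Let m̂ = argmax_{m' ∈ D} ⟨m', Γ⟩. Let d_min = min over distinct pairs m', m'' ∈ D of the Hamming distance d_H(m', m''). Then the probability of exact decoding satisfies P(m̂ = m) ≥ 1 - (|D| - 1) Φ(-(μ/σ)√(d_min)), and consequently the expected bit accuracy E[(1/K)∑_k 1{m̂_k = m_k}] ≥ 1 - (|D| - 1) Φ(-(μ/σ)√(d_min)). -/

import Mathlib

open MeasureTheory ProbabilityTheory Real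

/-- Euclidean inner product on `Fin n → ℝ`. -/
noncomputable def dotp {n : ℕ} (x y : Fin n → ℝ) : ℝ := ∑ i, x i * y i

/-- Hamming distance between two vectors. -/
noncomputable def dH {K : ℕ} (a b : Fin K → ℝ) : ℕ :=
  (Finset.univ.filter fun k => a k ≠ b k).card

/-- The standard normal CDF. -/
noncomputable def Phi (x : ℝ) : ℝ :=
  ∫ t in Set.Iic x, (Real.sqrt (2 * Real.pi))⁻¹ * Real.exp (-(t ^ 2) / 2)

open NNReal in
lemma pdf_prod (m1 m2 : ℝ) (v1 v2 : ℝ≥0) (h1 : v1 ≠ 0) (h2 : v2 ≠ 0) (z x : ℝ) :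
    gaussianPDFReal m1 v1 x * gaussianPDFReal m2 v2 (z - x)
      = gaussianPDFReal (m1 + m2) (v1 + v2) z *
        gaussianPDFReal ((m1 * v2 + (z - m2) * v1) / (v1 + v2)) (v1 * v2 / (v1 + v2)) x := by
  have hv1 : (0:ℝ) < v1 := lt_of_le_of_ne v1.coe_nonneg (by exact_mod_cast (Ne.symm h1))
  have hv2 : (0:ℝ) < v2 := lt_of_le_of_ne v2.coe_nonneg (by exact_mod_cast (Ne.symm h2))
  have hv12 : (0:ℝ) < (v1:ℝ) + v2 := by positivity
  have hπ : (0:ℝ) < π := Real.pi_pos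
  simp only [gaussianPDFReal, NNReal.coe_add, NNReal.coe_mul, NNReal.coe_div]
  rw [mul_mul_mul_comm, mul_mul_mul_comm ((√(2 * π * ((v1:ℝ) + v2)))⁻¹),
    ← Real.exp_add, ← Real.exp_add]
  have hconst : (√(2 * π * v1))⁻¹ * (√(2 * π * v2))⁻¹
      = (√(2 * π * ((v1:ℝ) + v2)))⁻¹ * (√(2 * π * ((v1:ℝ) * v2 / ((v1:ℝ) + v2))))⁻¹ := by
    rw [← mul_inv, ← mul_inv, ← Real.sqrt_mul (by positivity), ← Real.sqrt_mul (by positivity)]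
    congr 2
    field_simp
  rw [hconst]
  congr 2
  field_simp
  ring

open NNReal in
lemma lint_pdf_conv (m1 m2 : ℝ) (v1 v2 : ℝ≥0) (h1 : v1 ≠ 0) (h2 : v2 ≠ 0) (z : ℝ) :
    ∫⁻ x, gaussianPDF m1 v1 x * gaussianPDF m2 v2 (z - x) = gaussianPDF (m1 + m2) (v1 + v2) z := by
  have h12 : v1 * v2 / (v1 + v2) ≠ 0 := by
    simp [div_eq_zero_iff, h1, h2, add_eq_zero]
  calc ∫⁻ x, gaussianPDF m1 v1 x * gaussianPDF m2 v2 (z - x)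
      = ∫⁻ x, ENNReal.ofReal (gaussianPDFReal m1 v1 x * gaussianPDFReal m2 v2 (z - x)) := by
        simp_rw [gaussianPDF, ENNReal.ofReal_mul (gaussianPDFReal_nonneg m1 v1 _)]
    _ = ∫⁻ x, ENNReal.ofReal (gaussianPDFReal (m1 + m2) (v1 + v2) z *
          gaussianPDFReal ((m1 * v2 + (z - m2) * v1) / (v1 + v2)) (v1 * v2 / (v1 + v2)) x) := by
        simp_rw [pdf_prod m1 m2 v1 v2 h1 h2 z]
    _ = gaussianPDF (m1 + m2) (v1 + v2) z := by
        simp_rw [ENNReal.ofReal_mul (gaussianPDFReal_nonneg (m1+m2) (v1+v2) z)]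
        rw [lintegral_const_mul _ ((measurable_gaussianPDFReal _ _).ennreal_ofReal)]
        rw [← ofReal_integral_eq_lintegral_ofReal (integrable_gaussianPDFReal _ _)
          (Filter.Eventually.of_forall (gaussianPDFReal_nonneg _ _)),
          integral_gaussianPDFReal_eq_one _ h12]
        simp [gaussianPDF]

open NNReal in
lemma gauss_conv (m1 m2 : ℝ) (v1 v2 : ℝ≥0) :
    Measure.map (fun p : ℝ × ℝ => p.1 + p.2) ((gaussianReal m1 v1).prod (gaussianReal m2 v2))
      = gaussianReal (m1 + m2) (v1 + v2) := by
  by_cases h1 : v1 = 0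
  · subst h1
    rw [gaussianReal_zero_var, Measure.dirac_prod, Measure.map_map (by fun_prop) (by fun_prop)]
    have : ((fun p : ℝ × ℝ => p.1 + p.2) ∘ Prod.mk m1) = fun x => m1 + x := rfl
    rw [this, gaussianReal_map_const_add, add_comm m2 m1, zero_add]
  by_cases h2 : v2 = 0
  · subst h2
    rw [gaussianReal_zero_var, Measure.prod_dirac, Measure.map_map (by fun_prop) (by fun_prop)]
    have : ((fun p : ℝ × ℝ => p.1 + p.2) ∘ (fun x => (x, m2))) = fun x => m2 + x := by
      funext x; simp [add_comm]
    rw [this, gaussianReal_map_const_add, add_comm m1 m2, add_zero]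
  ext s hs
  rw [Measure.map_apply (by fun_prop) hs, Measure.prod_apply (measurable_add hs),
    gaussianReal_apply _ (by simp [add_eq_zero, h1, h2]) s]
  have hmeas1 : Measurable (gaussianPDF m1 v1) := measurable_gaussianPDF _ _
  calc ∫⁻ x, (gaussianReal m2 v2) (Prod.mk x ⁻¹' ((fun p : ℝ × ℝ => p.1 + p.2) ⁻¹' s))
        ∂(gaussianReal m1 v1)
      = ∫⁻ x, (gaussianReal m2 v2) {y | x + y ∈ s} ∂(gaussianReal m1 v1) := rfl
    _ = ∫⁻ x, (∫⁻ z in s, gaussianPDF m2 v2 (z - x)) ∂(gaussianReal m1 v1) := by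
        refine lintegral_congr fun x => ?_
        rw [gaussianReal_apply _ h2]
        have hmp : MeasurePreserving (fun z : ℝ => z - x) volume volume := by
          simpa [sub_eq_add_neg] using measurePreserving_add_right (volume : Measure ℝ) (-x)
        have hemb : MeasurableEmbedding (fun z : ℝ => z - x) :=
          (Homeomorph.subRight x).measurableEmbedding
        rw [hmp.setLIntegral_comp_emb hemb (gaussianPDF m2 v2) s]
        have hset : ((fun z : ℝ => z - x) '' s) = {y | x + y ∈ s} := by
          ext y
          simp only [Set.mem_image, Set.mem_setOf_eq]
          constructor
          · rintro ⟨z, hz, rfl⟩; simpa [add_comm] using hz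
          · intro h; exact ⟨x + y, h, by ring⟩
        rw [hset]
    _ = ∫⁻ x, (∫⁻ z in s, gaussianPDF m1 v1 x * gaussianPDF m2 v2 (z - x)) := by
        have hm2 : Measurable fun p : ℝ × ℝ => gaussianPDF m2 v2 (p.2 - p.1) :=
          (measurable_gaussianPDF _ _).comp (measurable_snd.sub measurable_fst)
        rw [gaussianReal_of_var_ne_zero _ h1,
          lintegral_withDensity_eq_lintegral_mul _ hmeas1
            (Measurable.lintegral_prod_right (f := fun x z => gaussianPDF m2 v2 (z - x)) hm2)]
        refine lintegral_congr fun x => ?_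
        rw [Pi.mul_apply, ← lintegral_const_mul (gaussianPDF m1 v1 x)
          (f := fun z => gaussianPDF m2 v2 (z - x))
          ((measurable_gaussianPDF _ _).comp (measurable_id.sub measurable_const))]
    _ = ∫⁻ z in s, (∫⁻ x, gaussianPDF m1 v1 x * gaussianPDF m2 v2 (z - x)) := by
        rw [lintegral_lintegral_swap]
        exact ((hmeas1.comp measurable_fst).mul
          ((measurable_gaussianPDF _ _).comp (measurable_snd.sub measurable_fst))).aemeasurable
    _ = ∫⁻ z in s, gaussianPDF (m1 + m2) (v1 + v2) z := by
        refine setLIntegral_congr_fun hs (fun z _ => ?_)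
        exact lint_pdf_conv m1 m2 v1 v2 h1 h2 z

open NNReal in
lemma map_linear_pi : ∀ (K : ℕ) (c μm : Fin K → ℝ) (v : ℝ≥0),
    Measure.map (fun γ : Fin K → ℝ => ∑ k, c k * γ k)
        (Measure.pi fun k => gaussianReal (μm k) v)
      = gaussianReal (∑ k, c k * μm k) (∑ k, ((c k)^2).toNNReal * v) := by
  intro K
  induction K with
  | zero =>
    intro c μm v
    simp only [Finset.univ_eq_empty, Finset.sum_empty]
    rw [show (fun γ : Fin 0 → ℝ => (0:ℝ)) = fun _ => (0:ℝ) from rfl]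
    have : IsProbabilityMeasure (Measure.pi fun k : Fin 0 => gaussianReal (μm k) v) :=
      inferInstance
    rw [Measure.map_const, measure_univ, one_smul, gaussianReal_zero_var]
  | succ n ih =>
    intro c μm v
    have hmp := measurePreserving_piFinSuccAbove (fun k : Fin (n+1) => gaussianReal (μm k) v) 0
    set e := MeasurableEquiv.piFinSuccAbove (fun _ : Fin (n+1) => ℝ) 0 with he
    have hL : (fun γ : Fin (n+1) → ℝ => ∑ k, c k * γ k)
        = (fun p : ℝ × (Fin n → ℝ) => c 0 * p.1 + ∑ j, c (Fin.succAbove 0 j) * p.2 j) ∘ e := by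
      funext γ
      simp only [Function.comp_apply, he, MeasurableEquiv.piFinSuccAbove_apply]
      rw [Fin.sum_univ_succAbove (fun k => c k * γ k) 0]
      rfl
    rw [hL, ← Measure.map_map (by fun_prop) e.measurable, hmp.map_eq]
    have hstep : (fun p : ℝ × (Fin n → ℝ) => c 0 * p.1 + ∑ j, c (Fin.succAbove 0 j) * p.2 j)
        = (fun q : ℝ × ℝ => q.1 + q.2) ∘
          (Prod.map (fun x : ℝ => c 0 * x)
            (fun y : Fin n → ℝ => ∑ j, c (Fin.succAbove 0 j) * y j)) := rfl
    rw [hstep, ← Measure.map_map (by fun_prop) (by fun_prop),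
      ← Measure.map_prod_map _ _ (by fun_prop) (by fun_prop),
      gaussianReal_map_const_mul (c 0),
      ih (fun j => c (Fin.succAbove 0 j)) (fun j => μm (Fin.succAbove 0 j)) v,
      gauss_conv]
    congr 1
    · rw [Fin.sum_univ_succAbove (fun k => c k * μm k) 0]
    · rw [Fin.sum_univ_succAbove (fun k => ((c k)^2).toNNReal * v) 0]
      congr 2
      exact NNReal.coe_injective (by simp [Real.coe_toNNReal _ (sq_nonneg (c 0))])

open NNReal in
lemma stdIic (u : ℝ) : (gaussianReal 0 1 (Set.Iic u)).toReal = Phi u := by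
  rw [gaussianReal_apply 0 one_ne_zero (Set.Iic u)]
  have hpdf : ∀ t : ℝ, gaussianPDFReal 0 1 t
      = (Real.sqrt (2 * Real.pi))⁻¹ * Real.exp (-(t ^ 2) / 2) := by
    intro t; simp [gaussianPDFReal]
  have : ∫⁻ x in Set.Iic u, gaussianPDF 0 1 x
      = ENNReal.ofReal (∫ x in Set.Iic u, gaussianPDFReal 0 1 x) := by
    rw [ofReal_integral_eq_lintegral_ofReal ((integrable_gaussianPDFReal 0 1).restrict)
      (Filter.Eventually.of_forall fun x => gaussianPDFReal_nonneg 0 1 x)]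
    rfl
  rw [this, ENNReal.toReal_ofReal (integral_nonneg fun x => gaussianPDFReal_nonneg 0 1 x)]
  unfold Phi
  exact setIntegral_congr_fun measurableSet_Iic fun t _ => hpdf t

lemma std_neg : Measure.map (fun x : ℝ => -x) (gaussianReal 0 1) = gaussianReal 0 1 := by
  have := gaussianReal_map_const_mul (μ := 0) (v := 1) (-1)
  simp only [neg_one_mul, mul_zero] at this
  rw [this]
  congr 1
  exact NNReal.coe_injective (by norm_num)

lemma stdIci (t : ℝ) : gaussianReal 0 1 (Set.Ici t) = gaussianReal 0 1 (Set.Iic (-t)) := by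
  conv_lhs => rw [← std_neg]
  rw [Measure.map_apply measurable_neg measurableSet_Ici]
  congr 1
  ext x
  simp [neg_le]

open NNReal in
lemma gauss_shift (M : ℝ) (V : ℝ≥0) :
    gaussianReal M V = Measure.map (fun z => M + Real.sqrt V * z) (gaussianReal 0 1) := by
  have h1 : Measure.map (fun z : ℝ => Real.sqrt V * z) (gaussianReal 0 1) = gaussianReal 0 V := by
    rw [gaussianReal_map_const_mul (Real.sqrt V)]
    congr 1
    · ring
    · exact NNReal.coe_injective (by
        simp [Real.sq_sqrt (V.coe_nonneg)])
  have h2 : (fun z : ℝ => M + Real.sqrt V * z)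
      = (fun x => M + x) ∘ (fun z => Real.sqrt V * z) := rfl
  rw [h2, ← Measure.map_map (by fun_prop) (by fun_prop), h1, gaussianReal_map_const_add,
    zero_add]

open NNReal in
lemma gauss_tail (M : ℝ) (V : ℝ≥0) (hV : V ≠ 0) :
    (gaussianReal M V {x | 0 ≤ x}).toReal = Phi (M / Real.sqrt V) := by
  have hsV : (0:ℝ) < Real.sqrt V := Real.sqrt_pos.mpr
    (lt_of_le_of_ne V.coe_nonneg (by exact_mod_cast Ne.symm hV))
  rw [gauss_shift M V, Measure.map_apply (by fun_prop) (by
    exact measurableSet_le measurable_const measurable_id)]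
  have : ((fun z : ℝ => M + Real.sqrt V * z) ⁻¹' {x | 0 ≤ x}) = Set.Ici (-(M / Real.sqrt V)) := by
    ext z
    simp only [Set.mem_preimage, Set.mem_setOf_eq, Set.mem_Ici, neg_le]
    rw [← sub_nonneg]
    constructor
    · intro h; rw [le_div_iff₀ hsV]; nlinarith
    · intro h; rw [le_div_iff₀ hsV] at h; nlinarith
  rw [this, stdIci, neg_neg, stdIic]

lemma Phi_mono {x y : ℝ} (h : x ≤ y) : Phi x ≤ Phi y := by
  rw [← stdIic, ← stdIic]
  have : IsProbabilityMeasure (gaussianReal 0 1) := inferInstance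
  exact ENNReal.toReal_mono (measure_ne_top _ _) (measure_mono (Set.Iic_subset_Iic.mpr h))

lemma Phi_nonneg (x : ℝ) : 0 ≤ Phi x := by rw [← stdIic]; exact ENNReal.toReal_nonneg

lemma measurable_dotp {K : ℕ} (a : Fin K → ℝ) :
    Measurable (fun γ : Fin K → ℝ => dotp a γ) := by
  unfold dotp
  exact Finset.measurable_sum _ fun k _ => by fun_prop

section pair

open NNReal
variable {K : ℕ} (μ σ : ℝ) (a b : Fin K → ℝ)

lemma sum_mean (ha : ∀ k, a k = 1 ∨ a k = -1) (hb : ∀ k, b k = 1 ∨ b k = -1) :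
    ∑ k, (a k - b k) * (μ * b k) = (dH a b : ℝ) * (-2 * μ) := by
  have h : ∀ k, (a k - b k) * (μ * b k) = if a k ≠ b k then -2 * μ else 0 := by
    intro k
    rcases ha k with h1 | h1 <;> rcases hb k with h2 | h2 <;> simp [h1, h2] <;> norm_num
  rw [Finset.sum_congr rfl fun k _ => h k, ← Finset.sum_filter, Finset.sum_const, dH,
    nsmul_eq_mul]

lemma sum_var (ha : ∀ k, a k = 1 ∨ a k = -1) (hb : ∀ k, b k = 1 ∨ b k = -1) :
    ∑ k, (a k - b k)^2 = (dH a b : ℝ) * 4 := by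
  have h : ∀ k, (a k - b k)^2 = if a k ≠ b k then (4:ℝ) else 0 := by
    intro k
    rcases ha k with h1 | h1 <;> rcases hb k with h2 | h2 <;> simp [h1, h2] <;> norm_num
  rw [Finset.sum_congr rfl fun k _ => h k, ← Finset.sum_filter, Finset.sum_const, dH,
    nsmul_eq_mul]

lemma dH_pos (hab : a ≠ b) : 0 < dH a b := by
  rw [dH, Finset.card_pos]
  by_contra h
  push_neg at h
  exact hab (funext fun k => by
    by_contra hk
    exact Finset.eq_empty_iff_forall_notMem.mp h k
      (Finset.mem_filter.mpr ⟨Finset.mem_univ k, hk⟩))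

lemma var_coe (v : ℝ≥0) (hv : (v:ℝ) = σ ^ 2)
    (ha : ∀ k, a k = 1 ∨ a k = -1) (hb : ∀ k, b k = 1 ∨ b k = -1) :
    ((∑ k, ((a k - b k)^2).toNNReal * v : ℝ≥0) : ℝ) = (dH a b : ℝ) * 4 * σ ^ 2 := by
  rw [NNReal.coe_sum]
  simp_rw [NNReal.coe_mul, hv, Real.coe_toNNReal _ (sq_nonneg _)]
  rw [← Finset.sum_mul, sum_var a b ha hb]

lemma pair_prob {K : ℕ} (μ σ : ℝ) (hμ : 0 < μ) (hσ : 0 < σ) (a b : Fin K → ℝ)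
    (ha : ∀ k, a k = 1 ∨ a k = -1) (hb : ∀ k, b k = 1 ∨ b k = -1) (hab : a ≠ b)
    (v : ℝ≥0) (hv : (v:ℝ) = σ ^ 2)
    (P : Measure (Fin K → ℝ))
    (hP : P = Measure.pi fun k => gaussianReal (μ * b k) v) :
    (P {γ | dotp b γ ≤ dotp a γ}).toReal = Phi (-(μ / σ) * Real.sqrt (dH a b)) := by
  have hd : 0 < dH a b := dH_pos a b hab
  have hdR : (0:ℝ) < (dH a b : ℝ) := by exact_mod_cast hd
  have hL : Measurable (fun γ : Fin K → ℝ => ∑ k, (a k - b k) * γ k) :=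
    Finset.measurable_sum _ fun k _ => (measurable_pi_apply k).const_mul _
  have hset : {γ : Fin K → ℝ | dotp b γ ≤ dotp a γ}
      = (fun γ : Fin K → ℝ => ∑ k, (a k - b k) * γ k) ⁻¹' {x | 0 ≤ x} := by
    ext γ
    simp only [Set.mem_setOf_eq, Set.mem_preimage, sub_mul, Finset.sum_sub_distrib, sub_nonneg]
    exact Iff.rfl
  set V : ℝ≥0 := ∑ k, ((a k - b k)^2).toNNReal * v with hVdef
  have hVcoe : (V:ℝ) = (dH a b : ℝ) * 4 * σ ^ 2 := var_coe σ a b v hv ha hb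
  have hVne : V ≠ 0 := by
    intro h0
    rw [h0] at hVcoe
    push_cast at hVcoe
    nlinarith [mul_pos (mul_pos hdR (by norm_num : (0:ℝ) < 4)) (pow_pos hσ 2)]
  have hms : MeasurableSet {x : ℝ | 0 ≤ x} := measurableSet_Ici
  rw [hset, hP, ← Measure.map_apply hL hms, map_linear_pi K (fun k => a k - b k)
    (fun k => μ * b k) v, sum_mean μ a b ha hb, gauss_tail _ _ hVne]
  congr 1
  have hsV : Real.sqrt ((V:ℝ)) = 2 * σ * Real.sqrt (dH a b) := by
    rw [hVcoe, show (dH a b : ℝ) * 4 * σ ^ 2 = (2*σ)^2 * (dH a b) by ring,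
      Real.sqrt_mul (by positivity), Real.sqrt_sq (by positivity)]
  rw [hVdef] at hsV
  rw [hsV]
  have hsd : (0:ℝ) < Real.sqrt (dH a b) := Real.sqrt_pos.mpr hdR
  have h2 : Real.sqrt ((dH a b : ℝ)) * Real.sqrt ((dH a b : ℝ)) = ((dH a b : ℝ)) :=
    Real.mul_self_sqrt hdR.le
  rw [div_eq_iff (by positivity : (2 * σ * Real.sqrt ((dH a b : ℝ))) ≠ 0)]
  field_simp
  linear_combination h2

lemma pair_tie {K : ℕ} (μ σ : ℝ) (hσ : 0 < σ) (a b w : Fin K → ℝ)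
    (ha : ∀ k, a k = 1 ∨ a k = -1) (hb : ∀ k, b k = 1 ∨ b k = -1) (hab : a ≠ b)
    (v : ℝ≥0) (hv : (v:ℝ) = σ ^ 2)
    (P : Measure (Fin K → ℝ))
    (hP : P = Measure.pi fun k => gaussianReal (μ * w k) v) :
    P {γ | dotp a γ = dotp b γ} = 0 := by
  have hd : 0 < dH a b := dH_pos a b hab
  have hdR : (0:ℝ) < (dH a b : ℝ) := by exact_mod_cast hd
  have hL : Measurable (fun γ : Fin K → ℝ => ∑ k, (a k - b k) * γ k) :=
    Finset.measurable_sum _ fun k _ => (measurable_pi_apply k).const_mul _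
  have hset : {γ : Fin K → ℝ | dotp a γ = dotp b γ}
      = (fun γ : Fin K → ℝ => ∑ k, (a k - b k) * γ k) ⁻¹' {(0:ℝ)} := by
    ext γ
    simp only [Set.mem_setOf_eq, Set.mem_preimage, sub_mul, Finset.sum_sub_distrib,
      Set.mem_singleton_iff, sub_eq_zero]
    exact Iff.rfl
  set V : ℝ≥0 := ∑ k, ((a k - b k)^2).toNNReal * v with hVdef
  have hVcoe : (V:ℝ) = (dH a b : ℝ) * 4 * σ ^ 2 := var_coe σ a b v hv ha hb
  have hVne : V ≠ 0 := by
    intro h0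
    rw [h0] at hVcoe
    push_cast at hVcoe
    nlinarith [mul_pos (mul_pos hdR (by norm_num : (0:ℝ) < 4)) (pow_pos hσ 2)]
  rw [hset, hP, ← Measure.map_apply hL (measurableSet_singleton 0),
    map_linear_pi K (fun k => a k - b k) (fun k => μ * w k) v]
  exact (gaussianReal_absolutelyContinuous _ hVne) (measure_singleton 0)

end pair

/-- for a dictionary `𝒟 ⊆ {±1}^K` with minimum pairwise Hamming
distance `d_min`, true message `m ∈ 𝒟` and `Γ ~ N(μm, σ² I_K)`, the dictionary
decoder `m̂ = argmax_{m'∈𝒟} ⟨m', Γ⟩` (ties broken arbitrarily) satisfies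
`P(m̂ = m) ≥ 1 - (|𝒟|-1) Φ(-(μ/σ)√d_min)`, and the expected bit accuracy obeys
the same lower bound. -/
theorem stmt6 {K : ℕ} (hK : 0 < K) (μ σ : ℝ) (hμ : 0 < μ) (hσ : 0 < σ)
    (𝒟 : Finset (Fin K → ℝ)) (h𝒟 : ∀ a ∈ 𝒟, ∀ k, a k = 1 ∨ a k = -1)
    (m : Fin K → ℝ) (hm : m ∈ 𝒟)
    (dmin : ℕ)
    (hdmin_le : ∀ a ∈ 𝒟, ∀ b ∈ 𝒟, a ≠ b → dmin ≤ dH a b)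
    (hdmin_mem : ∃ a ∈ 𝒟, ∃ b ∈ 𝒟, a ≠ b ∧ dH a b = dmin)
    (dec : (Fin K → ℝ) → (Fin K → ℝ))
    (hdec_mem : ∀ γ, dec γ ∈ 𝒟)
    (hdec_max : ∀ γ, ∀ a ∈ 𝒟, dotp a γ ≤ dotp (dec γ) γ)
    (P : Measure (Fin K → ℝ))
    (hP : P = Measure.pi fun k => gaussianReal (μ * m k) ⟨σ ^ 2, sq_nonneg σ⟩) :
    1 - ((𝒟.card : ℝ) - 1) * Phi (-(μ / σ) * Real.sqrt dmin) ≤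
        (P {γ | dec γ = m}).toReal ∧
    1 - ((𝒟.card : ℝ) - 1) * Phi (-(μ / σ) * Real.sqrt dmin) ≤
        ∫ γ, (K : ℝ)⁻¹ * ∑ k : Fin K, (if dec γ k = m k then (1 : ℝ) else 0) ∂P := by
  classical
  have hPprob : IsProbabilityMeasure P := by
    rw [hP]; have := fun k : Fin K => instIsProbabilityMeasureGaussianReal (μ * m k) ⟨σ ^ 2, sq_nonneg σ⟩; infer_instance
  have hSmeas : ∀ a : Fin K → ℝ,
      MeasurableSet {γ : Fin K → ℝ | ∀ b ∈ 𝒟, b ≠ a → dotp b γ < dotp a γ} := by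
    intro a
    have heq : {γ : Fin K → ℝ | ∀ b ∈ 𝒟, b ≠ a → dotp b γ < dotp a γ}
        = ⋂ b ∈ 𝒟.filter (· ≠ a), {γ | dotp b γ < dotp a γ} := by
      ext γ
      simp only [Set.mem_setOf_eq, Set.mem_iInter, Finset.mem_filter]
      tauto
    rw [heq]
    exact Finset.measurableSet_biInter _ fun b _ =>
      measurableSet_lt (measurable_dotp b) (measurable_dotp a)
  set S := {γ : Fin K → ℝ | ∀ b ∈ 𝒟, b ≠ m → dotp b γ < dotp m γ} with hSdef
  have hS : MeasurableSet S := hSmeas m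
  have hcard1 : 1 ≤ 𝒟.card := Finset.card_pos.mpr ⟨m, hm⟩
  have hcompl : Sᶜ ⊆ ⋃ a ∈ 𝒟.erase m, {γ | dotp m γ ≤ dotp a γ} := by
    intro γ hγ
    simp only [hSdef, Set.mem_compl_iff, Set.mem_setOf_eq, not_forall] at hγ
    obtain ⟨b, hb, hbm, hle⟩ := hγ
    exact Set.mem_biUnion (Finset.mem_erase.mpr ⟨hbm, hb⟩) (not_lt.mp hle)
  set φ := Phi (-(μ / σ) * Real.sqrt (dmin : ℝ)) with hφ
  have hφ0 : 0 ≤ φ := Phi_nonneg _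
  have hpair : ∀ a ∈ 𝒟.erase m, (P {γ | dotp m γ ≤ dotp a γ}).toReal ≤ φ := by
    intro a ha'
    obtain ⟨ham, haD⟩ := Finset.mem_erase.mp ha'
    rw [pair_prob μ σ hμ hσ a m (h𝒟 a haD) (h𝒟 m hm) ham ⟨σ ^ 2, sq_nonneg σ⟩ rfl P hP]
    apply Phi_mono
    have hdd : (dmin : ℝ) ≤ (dH a m : ℝ) := by exact_mod_cast hdmin_le a haD m hm ham
    have h1 : Real.sqrt (dmin : ℝ) ≤ Real.sqrt (dH a m : ℝ) := Real.sqrt_le_sqrt hdd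
    have h0 : 0 ≤ μ / σ := le_of_lt (div_pos hμ hσ)
    nlinarith
  have hScompl_le : (P Sᶜ).toReal ≤ ((𝒟.card : ℝ) - 1) * φ := by
    have h1 : P Sᶜ ≤ ∑ a ∈ 𝒟.erase m, P {γ | dotp m γ ≤ dotp a γ} :=
      le_trans (measure_mono hcompl) (measure_biUnion_finset_le _ _)
    have h2 : (P Sᶜ).toReal ≤ ∑ a ∈ 𝒟.erase m, (P {γ | dotp m γ ≤ dotp a γ}).toReal := by
      rw [← ENNReal.toReal_sum (fun a _ => measure_ne_top P _)]
      exact ENNReal.toReal_mono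
        (ENNReal.sum_ne_top.mpr fun a _ => measure_ne_top P _) h1
    refine h2.trans ?_
    refine le_trans (Finset.sum_le_card_nsmul _ _ φ fun a ha' => hpair a ha') ?_
    rw [Finset.card_erase_of_mem hm, nsmul_eq_mul]
    have hc : ((𝒟.card - 1 : ℕ) : ℝ) = (𝒟.card : ℝ) - 1 := by
      rw [Nat.cast_sub hcard1]; norm_num
    rw [hc]
  have hadd : (P S).toReal + (P Sᶜ).toReal = 1 := by
    have h := congrArg ENNReal.toReal (measure_add_measure_compl (μ := P) hS)
    rwa [ENNReal.toReal_add (measure_ne_top _ _) (measure_ne_top _ _), measure_univ,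
      ENNReal.toReal_one] at h
  have hSlb : 1 - ((𝒟.card : ℝ) - 1) * φ ≤ (P S).toReal := by linarith
  have hSsub : S ⊆ {γ | dec γ = m} := by
    intro γ hγ
    by_contra hne
    exact absurd (hdec_max γ m hm) (not_le.mpr (hγ (dec γ) (hdec_mem γ) hne))
  constructor
  · exact hSlb.trans (ENNReal.toReal_mono (measure_ne_top _ _) (measure_mono hSsub))
  -- part 2
  set Tset := ⋃ a ∈ 𝒟, ⋃ b ∈ 𝒟, {γ : Fin K → ℝ | a ≠ b ∧ dotp a γ = dotp b γ} with hTdef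
  have hpairT : ∀ a ∈ 𝒟, ∀ b ∈ 𝒟, P {γ : Fin K → ℝ | a ≠ b ∧ dotp a γ = dotp b γ} = 0 := by
    intro a ha b hb
    by_cases hab : a = b
    · simp [hab]
    · have heq : {γ : Fin K → ℝ | a ≠ b ∧ dotp a γ = dotp b γ}
          = {γ | dotp a γ = dotp b γ} := by
        ext γ; simp [hab]
      rw [heq]
      exact pair_tie μ σ hσ a b m (h𝒟 a ha) (h𝒟 b hb) hab ⟨σ ^ 2, sq_nonneg σ⟩ rfl P hP
  have hT : P Tset = 0 := by
    refine le_antisymm (le_trans (measure_biUnion_finset_le _ _)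
      (le_of_eq (Finset.sum_eq_zero fun a ha => ?_))) zero_le
    exact le_antisymm (le_trans (measure_biUnion_finset_le _ _)
      (le_of_eq (Finset.sum_eq_zero fun b hb => hpairT a ha b hb))) zero_le
  set g : (Fin K → ℝ) → ℝ := fun γ => ∑ a ∈ 𝒟,
    Set.indicator {γ' : Fin K → ℝ | ∀ b ∈ 𝒟, b ≠ a → dotp b γ' < dotp a γ'}
      (fun _ => (K:ℝ)⁻¹ * ∑ k, (if a k = m k then (1:ℝ) else 0)) γ with hgdef
  have hfg : ∀ γ ∉ Tset, (K : ℝ)⁻¹ * ∑ k : Fin K, (if dec γ k = m k then (1 : ℝ) else 0)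
      = g γ := by
    intro γ hγ
    have hnt : ∀ a ∈ 𝒟, ∀ b ∈ 𝒟, a ≠ b → dotp a γ ≠ dotp b γ := by
      intro a ha b hb hab heq
      exact hγ (Set.mem_biUnion ha (Set.mem_biUnion hb ⟨hab, heq⟩))
    have hin : γ ∈ {γ' : Fin K → ℝ | ∀ b ∈ 𝒟, b ≠ dec γ → dotp b γ' < dotp (dec γ) γ'} := by
      intro b hb hbne
      exact lt_of_le_of_ne (hdec_max γ b hb) (hnt b hb (dec γ) (hdec_mem γ) hbne)
    simp only [hgdef]
    rw [Finset.sum_eq_single (dec γ)]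
    · rw [Set.indicator_of_mem hin]
    · intro a ha hane
      apply Set.indicator_of_notMem
      intro hmem
      exact absurd (hdec_max γ a ha)
        (not_le.mpr (hmem (dec γ) (hdec_mem γ) fun h => hane h.symm))
    · intro h; exact absurd (hdec_mem γ) h
  have hae : (fun γ => (K : ℝ)⁻¹ * ∑ k : Fin K, (if dec γ k = m k then (1 : ℝ) else 0))
      =ᵐ[P] g := by
    refine ae_iff.mpr (measure_mono_null (fun γ hγ => ?_) hT)
    by_contra h
    exact hγ (hfg γ h)
  rw [integral_congr_ae hae]
  have hgint : Integrable g P := by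
    refine integrable_finset_sum _ fun a ha => ?_
    exact (integrable_const _).indicator (hSmeas a)
  have hnonneg : ∀ a : Fin K → ℝ, ∀ γ, 0 ≤ Set.indicator
      {γ' : Fin K → ℝ | ∀ b ∈ 𝒟, b ≠ a → dotp b γ' < dotp a γ'}
      (fun _ => (K:ℝ)⁻¹ * ∑ k, (if a k = m k then (1:ℝ) else 0)) γ := by
    intro a γ
    refine Set.indicator_nonneg (fun _ _ => ?_) γ
    refine mul_nonneg (by positivity) (Finset.sum_nonneg fun k _ => ?_)
    split <;> norm_num
  have hle : ∀ γ, Set.indicator S (fun _ => (1:ℝ)) γ ≤ g γ := by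
    intro γ
    have hsum : ∑ k : Fin K, (if m k = m k then (1:ℝ) else 0) = K := by simp
    have h1 : Set.indicator S (fun _ => (1:ℝ)) γ
        ≤ Set.indicator {γ' : Fin K → ℝ | ∀ b ∈ 𝒟, b ≠ m → dotp b γ' < dotp m γ'}
          (fun _ => (K:ℝ)⁻¹ * ∑ k, (if m k = m k then (1:ℝ) else 0)) γ := by
      by_cases hmem : γ ∈ S
      · rw [Set.indicator_of_mem hmem, Set.indicator_of_mem
          (show γ ∈ {γ' : Fin K → ℝ | ∀ b ∈ 𝒟, b ≠ m → dotp b γ' < dotp m γ'} from hmem),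
          hsum, inv_mul_cancel₀ (show (K:ℝ) ≠ 0 by exact_mod_cast hK.ne')]
      · rw [Set.indicator_of_notMem hmem, Set.indicator_of_notMem
          (show γ ∉ {γ' : Fin K → ℝ | ∀ b ∈ 𝒟, b ≠ m → dotp b γ' < dotp m γ'} from hmem)]
    refine h1.trans ?_
    simp only [hgdef]
    have hterm := Finset.single_le_sum
      (f := fun a => Set.indicator {γ' : Fin K → ℝ | ∀ b ∈ 𝒟, b ≠ a → dotp b γ' < dotp a γ'}
        (fun _ => (K:ℝ)⁻¹ * ∑ k, (if a k = m k then (1:ℝ) else 0)) γ)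
      (fun a _ => hnonneg a γ) hm
    simpa using hterm
  have hmono : ∫ γ, Set.indicator S (fun _ => (1:ℝ)) γ ∂P ≤ ∫ γ, g γ ∂P :=
    integral_mono ((integrable_const (1:ℝ)).indicator hS) hgint hle
  have hind : ∫ γ, Set.indicator S (fun _ => (1:ℝ)) γ ∂P = (P S).toReal := by
    rw [integral_indicator hS]
    simp [measureReal_def]
  calc 1 - ((𝒟.card : ℝ) - 1) * φ ≤ (P S).toReal := hSlb
    _ = ∫ γ, Set.indicator S (fun _ => (1:ℝ)) γ ∂P := hind.symm
    _ ≤ ∫ γ, g γ ∂P := hmono
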